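/- In the sequential sampling-without-replacement setting with fixed losses L on pool {1,...,N}, Var[R_PURE] = (1/M²)∑_{m=1}^M E[Var[w_m·L(i_m) | i_{1:m-1}]], where R_PURE = (1/M)∑ a_m, a_m = w_m·L(i_m) + (1/N)∑_{t<m} L(i_t), and w_m = 1/(N·q_m(i_m)). -/

import Mathlib

/-!
Sequential sampling without replacement of `M` indices from a pool `{1,…,N}`
(modelled as `Fin N`). A trajectory is a function `σ : Fin M → Fin N`;
`q m σ i` is the conditional probability that the `(m+1)`-st acquired index is
`i` given the history `σ 0, …, σ (m-1)` (it is assumed to depend only on that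
history). Expectations are sums over injective trajectories weighted by the
product of conditional probabilities.
-/

/-- Probability of a trajectory `σ` under the sequential proposals `q`. -/
noncomputable def prob (N M : ℕ) (q : Fin M → (Fin M → Fin N) → Fin N → ℝ)
    (σ : Fin M → Fin N) : ℝ :=
  ∏ m : Fin M, q m σ (σ m)

/-- Expectation of a trajectory functional under sequential sampling without
replacement with proposals `q`. -/
noncomputable def expec (N M : ℕ) (q : Fin M → (Fin M → Fin N) → Fin N → ℝ)
    (f : (Fin M → Fin N) → ℝ) : ℝ :=
  ∑ σ : Fin M → Fin N, if Function.Injective σ then prob N M q σ * f σ else 0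

/-- The PURE term `a_m = w_m·L(i_m) + (1/N)∑_{t<m} L(i_t)` with
`w_m = 1/(N·q_m(i_m))` (here `m : Fin M` is zero-based). -/
noncomputable def aTerm (N M : ℕ) (L : Fin N → ℝ)
    (q : Fin M → (Fin M → Fin N) → Fin N → ℝ) (m : Fin M)
    (σ : Fin M → Fin N) : ℝ :=
  L (σ m) / ((N : ℝ) * q m σ (σ m))
    + (1 / (N : ℝ)) * ∑ t : Fin M, if (t : ℕ) < (m : ℕ) then L (σ t) else 0

/-- The conditional variance `Var[w_m·L(i_m) | i_{1:m-1}]` as a function of the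
history (it depends on `σ` only through `σ 0, …, σ (m-1)`). -/
noncomputable def condVar (N M : ℕ) (L : Fin N → ℝ)
    (q : Fin M → (Fin M → Fin N) → Fin N → ℝ) (m : Fin M)
    (σ : Fin M → Fin N) : ℝ :=
  (∑ i : Fin N, q m σ i * (L i / ((N : ℝ) * q m σ i)) ^ 2)
    - (∑ i : Fin N, q m σ i * (L i / ((N : ℝ) * q m σ i))) ^ 2


open Finset Function

namespace PureAux

variable {N M : ℕ}

/-- partial probability of the first `t` steps -/
noncomputable def Ppart (q : Fin M → (Fin M → Fin N) → Fin N → ℝ) (t : ℕ)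
    (σ : Fin M → Fin N) : ℝ :=
  ∏ k : Fin M, if (k : ℕ) < t then q k σ (σ k) else 1

/-- injectivity on the first `t` coordinates -/
def InjTo (t : ℕ) (σ : Fin M → Fin N) : Prop :=
  ∀ k k' : Fin M, (k : ℕ) < t → (k' : ℕ) < t → σ k = σ k' → k = k'

open Classical in
/-- partial expectation operator -/
noncomputable def S (q : Fin M → (Fin M → Fin N) → Fin N → ℝ) (t : ℕ)
    (f : (Fin M → Fin N) → ℝ) : ℝ :=
  ∑ σ : Fin M → Fin N, if InjTo t σ then Ppart q t σ * f σ else 0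

lemma expec_eq_S (q : Fin M → (Fin M → Fin N) → Fin N → ℝ) (f : (Fin M → Fin N) → ℝ) :
    expec N M q f = S q M f := by
  classical
  unfold expec S
  refine Finset.sum_congr rfl fun σ _ => ?_
  have h1 : Function.Injective σ ↔ InjTo M σ := by
    constructor
    · intro h k k' _ _ hkk; exact h hkk
    · intro h a b hab; exact h a b a.isLt b.isLt hab
  have h2 : prob N M q σ = Ppart q M σ := by
    unfold prob Ppart
    exact Finset.prod_congr rfl fun k _ => by simp [k.isLt]
  by_cases h : Function.Injective σ
  · rw [if_pos h, if_pos (h1.mp h), h2]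
  · rw [if_neg h, if_neg (fun hh => h (h1.mpr hh))]

lemma sum_update (t : Fin M) (h : (Fin M → Fin N) → ℝ) :
    ∑ σ : Fin M → Fin N, ∑ i : Fin N, h (Function.update σ t i)
      = (N : ℝ) * ∑ σ : Fin M → Fin N, h σ := by
  classical
  have inv : Function.Involutive
      (fun p : (Fin M → Fin N) × Fin N => (Function.update p.1 t p.2, p.1 t)) := by
    intro p
    simp [Function.update_idem, Function.update_eq_self]
  have key : ∑ p : (Fin M → Fin N) × Fin N, h (Function.update p.1 t p.2)
      = ∑ p : (Fin M → Fin N) × Fin N, h p.1 :=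
    Fintype.sum_equiv inv.toPerm _ _ (fun p => rfl)
  have l1 : ∑ σ : Fin M → Fin N, ∑ i : Fin N, h (Function.update σ t i)
      = ∑ p : (Fin M → Fin N) × Fin N, h (Function.update p.1 t p.2) := by
    rw [Fintype.sum_prod_type]
  have l2 : ∑ p : (Fin M → Fin N) × Fin N, h p.1
      = (N : ℝ) * ∑ σ : Fin M → Fin N, h σ := by
    rw [Fintype.sum_prod_type]
    simp [Finset.mul_sum, mul_comm]
  rw [l1, key, l2]

lemma Ppart_succ (q : Fin M → (Fin M → Fin N) → Fin N → ℝ) (m : Fin M) (σ : Fin M → Fin N) :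
    Ppart q ((m : ℕ) + 1) σ = Ppart q (m : ℕ) σ * q m σ (σ m) := by
  classical
  unfold Ppart
  rw [← Finset.prod_erase_mul univ _ (mem_univ m),
      ← Finset.prod_erase_mul univ
        (fun k : Fin M => if (k : ℕ) < (m : ℕ) then q k σ (σ k) else 1) (mem_univ m)]
  have h1 : ∀ k ∈ univ.erase m,
      (if (k : ℕ) < (m : ℕ) + 1 then q k σ (σ k) else 1)
        = (if (k : ℕ) < (m : ℕ) then q k σ (σ k) else 1) := by
    intro k hk
    have hkm : k ≠ m := (Finset.mem_erase.mp hk).1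
    have hiff : ((k : ℕ) < (m : ℕ) + 1) ↔ ((k : ℕ) < (m : ℕ)) := by
      constructor
      · intro h
        rcases Nat.lt_succ_iff_lt_or_eq.mp h with h' | h'
        · exact h'
        · exact absurd (Fin.ext h') hkm
      · exact fun h => Nat.lt_succ_of_lt h
    exact if_congr hiff rfl rfl
  rw [Finset.prod_congr rfl h1]
  simp

section WithHyp

variable (q : Fin M → (Fin M → Fin N) → Fin N → ℝ)
variable (hdep : ∀ (m : Fin M) (σ σ' : Fin M → Fin N),
      (∀ k : Fin M, (k : ℕ) < (m : ℕ) → σ k = σ' k) → q m σ = q m σ')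
variable (hpos : ∀ (m : Fin M) (σ : Fin M → Fin N) (i : Fin N),
      (∀ k : Fin M, (k : ℕ) < (m : ℕ) → σ k ≠ i) → 0 < q m σ i)
variable (hzero : ∀ (m : Fin M) (σ : Fin M → Fin N) (i : Fin N),
      (∃ k : Fin M, (k : ℕ) < (m : ℕ) ∧ σ k = i) → q m σ i = 0)
variable (hsum : ∀ (m : Fin M) (σ : Fin M → Fin N), ∑ i : Fin N, q m σ i = 1)

include hdep hzero in
/-- one-step marginalization -/
lemma S_succ (hN : (N : ℝ) ≠ 0) (m : Fin M) (f : (Fin M → Fin N) → ℝ) :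
    S q ((m : ℕ) + 1) f
      = ((N : ℝ))⁻¹ * S q (m : ℕ)
          (fun σ => ∑ i : Fin N, q m σ i * f (Function.update σ m i)) := by
  classical
  set h : (Fin M → Fin N) → ℝ :=
    fun σ => if InjTo (m : ℕ) σ then Ppart q (m : ℕ) σ * q m σ (σ m) * f σ else 0 with hh
  have step1 : S q ((m : ℕ) + 1) f = ∑ σ : Fin M → Fin N, h σ := by
    unfold S
    refine Finset.sum_congr rfl fun σ _ => ?_
    simp only [hh]
    by_cases h2 : InjTo ((m : ℕ) + 1) σ
    · have h1 : InjTo (m : ℕ) σ := fun k k' hk hk' =>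
        h2 k k' (Nat.lt_succ_of_lt hk) (Nat.lt_succ_of_lt hk')
      rw [if_pos h2, if_pos h1, Ppart_succ]
    · by_cases h1 : InjTo (m : ℕ) σ
      · rw [if_neg h2, if_pos h1]
        have hcol : ∃ k : Fin M, (k : ℕ) < (m : ℕ) ∧ σ k = σ m := by
          by_contra hc
          push_neg at hc
          apply h2
          intro k k' hk hk' hkk
          rcases Nat.lt_succ_iff_lt_or_eq.mp hk with hk0 | hk0
          · rcases Nat.lt_succ_iff_lt_or_eq.mp hk' with hk1 | hk1
            · exact h1 k k' hk0 hk1 hkk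
            · exact absurd (hkk.trans (by rw [Fin.ext hk1])) (hc k hk0)
          · rcases Nat.lt_succ_iff_lt_or_eq.mp hk' with hk1 | hk1
            · exact absurd (hkk.symm.trans (by rw [Fin.ext hk0])) (hc k' hk1)
            · exact (Fin.ext hk0).trans (Fin.ext hk1).symm
        rw [hzero m σ (σ m) hcol]
        ring
      · rw [if_neg h2, if_neg h1]
  have hupd : ∀ (σ : Fin M → Fin N) (i : Fin N),
      h (Function.update σ m i)
        = (if InjTo (m : ℕ) σ then
            Ppart q (m : ℕ) σ * q m σ i * f (Function.update σ m i) else 0) := by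
    intro σ i
    have hne : ∀ k : Fin M, (k : ℕ) < (m : ℕ) → Function.update σ m i k = σ k := by
      intro k hk
      have : k ≠ m := fun h => absurd (congrArg Fin.val h) (Nat.ne_of_lt hk)
      simp [Function.update_of_ne this]
    have hInj : InjTo (m : ℕ) (Function.update σ m i) ↔ InjTo (m : ℕ) σ := by
      constructor
      · intro h k k' hk hk' hkk
        exact h k k' hk hk' (by rw [hne k hk, hne k' hk']; exact hkk)
      · intro h k k' hk hk' hkk
        exact h k k' hk hk' (by rw [← hne k hk, ← hne k' hk']; exact hkk)
    have hP : Ppart q (m : ℕ) (Function.update σ m i) = Ppart q (m : ℕ) σ := by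
      unfold Ppart
      refine Finset.prod_congr rfl fun k _ => ?_
      by_cases hk : (k : ℕ) < (m : ℕ)
      · rw [if_pos hk, if_pos hk, hne k hk,
          hdep k (Function.update σ m i) σ (fun k' hk' => hne k' (hk'.trans hk))]
      · rw [if_neg hk, if_neg hk]
    have hq : q m (Function.update σ m i) ((Function.update σ m i) m) = q m σ i := by
      rw [Function.update_self, hdep m (Function.update σ m i) σ hne]
    simp only [hh]
    by_cases hc : InjTo (m : ℕ) σ
    · rw [if_pos (hInj.mpr hc), if_pos hc, hP, hq]
    · rw [if_neg (fun hh' => hc (hInj.mp hh')), if_neg hc]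
  have e1 : S q (m : ℕ)
      (fun σ => ∑ i : Fin N, q m σ i * f (Function.update σ m i))
      = ∑ σ : Fin M → Fin N, ∑ i : Fin N, h (Function.update σ m i) := by
    unfold S
    refine Finset.sum_congr rfl fun σ _ => ?_
    rw [Finset.sum_congr rfl fun i (_ : i ∈ univ) => hupd σ i]
    by_cases hc : InjTo (m : ℕ) σ
    · simp only [if_pos hc, Finset.mul_sum]
      exact Finset.sum_congr rfl fun i _ => by ring
    · simp only [if_neg hc, Finset.sum_const_zero]
  rw [step1, e1, sum_update m h, inv_mul_cancel_left₀ hN]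

include hdep hzero hsum in
lemma S_of_dep (hN : (N : ℝ) ≠ 0) (t : ℕ) (f : (Fin M → Fin N) → ℝ)
    (hf : ∀ σ σ' : Fin M → Fin N, (∀ k : Fin M, (k : ℕ) < t → σ k = σ' k) → f σ = f σ') :
    ∀ u, t ≤ u → u ≤ M → S q u f = ((N : ℝ)⁻¹) ^ (u - t) * S q t f := by
  intro u htu
  induction u, htu using Nat.le_induction with
  | base => intro _; simp
  | succ u htu ih =>
    intro huM
    have hu : u < M := huM
    set m : Fin M := ⟨u, hu⟩ with hm
    have heq : (fun σ => ∑ i : Fin N, q m σ i * f (Function.update σ m i)) = f := by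
      funext σ
      have hfi : ∀ i, f (Function.update σ m i) = f σ := by
        intro i
        apply hf
        intro k hk
        have hkm : k ≠ m := by
          intro h
          rw [h] at hk
          have : (m : ℕ) = u := rfl
          omega
        rw [Function.update_of_ne hkm]
      simp only [hfi, ← Finset.sum_mul, hsum m σ, one_mul]
    have r := S_succ q hdep hzero hN m f
    rw [heq] at r
    have hmu : (m : ℕ) = u := rfl
    rw [hmu] at r
    rw [r, ih (Nat.le_of_succ_le huM)]
    have hsub : u + 1 - t = (u - t) + 1 := by omega
    rw [hsub, pow_succ]
    ring

include hdep hzero hsum in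
lemma tower (hN : (N : ℝ) ≠ 0) (m : Fin M) (G : (Fin M → Fin N) → Fin N → ℝ)
    (hG : ∀ σ σ' : Fin M → Fin N, (∀ k : Fin M, (k : ℕ) < (m : ℕ) → σ k = σ' k) → G σ = G σ') :
    expec N M q (fun σ => G σ (σ m))
      = expec N M q (fun σ => ∑ i : Fin N, q m σ i * G σ i) := by
  rw [expec_eq_S, expec_eq_S]
  have hf : ∀ σ σ' : Fin M → Fin N, (∀ k : Fin M, (k : ℕ) < (m : ℕ) + 1 → σ k = σ' k) →
      G σ (σ m) = G σ' (σ' m) := by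
    intro σ σ' hσ
    rw [hG σ σ' (fun k hk => hσ k (Nat.lt_succ_of_lt hk)), hσ m (Nat.lt_succ_self _)]
  have hg : ∀ σ σ' : Fin M → Fin N, (∀ k : Fin M, (k : ℕ) < (m : ℕ) → σ k = σ' k) →
      (∑ i : Fin N, q m σ i * G σ i) = ∑ i : Fin N, q m σ' i * G σ' i := by
    intro σ σ' hσ
    rw [hdep m σ σ' hσ, hG σ σ' hσ]
  have d1 := S_of_dep q hdep hzero hsum hN ((m : ℕ) + 1) (fun σ => G σ (σ m)) hf M m.isLt (le_refl M)
  have d2 := S_of_dep q hdep hzero hsum hN (m : ℕ)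
    (fun σ => ∑ i : Fin N, q m σ i * G σ i) hg M (le_of_lt m.isLt) (le_refl M)
  have r' : S q ((m : ℕ) + 1) (fun σ => G σ (σ m))
      = (N : ℝ)⁻¹ * S q (m : ℕ) (fun σ => ∑ i : Fin N, q m σ i * G σ i) := by
    rw [S_succ q hdep hzero hN m (fun σ => G σ (σ m))]
    congr 1
    apply congrArg
    funext σ
    refine Finset.sum_congr rfl fun i _ => ?_
    have hne : ∀ k : Fin M, (k : ℕ) < (m : ℕ) → Function.update σ m i k = σ k := by
      intro k hk
      have hkm : k ≠ m := fun h => absurd (congrArg Fin.val h) (Nat.ne_of_lt hk)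
      simp [Function.update_of_ne hkm]
    have hGe : G (Function.update σ m i) (Function.update σ m i m) = G σ i := by
      rw [hG (Function.update σ m i) σ hne, Function.update_self]
    show q m σ i * G (Function.update σ m i) (Function.update σ m i m) = q m σ i * G σ i
    rw [hGe]
  rw [d1, r', d2]
  have hsub : M - (m : ℕ) = (M - ((m : ℕ) + 1)) + 1 := by
    have := m.isLt; omega
  rw [hsub, pow_succ]
  ring

lemma expec_congr (f g : (Fin M → Fin N) → ℝ)
    (h : ∀ σ : Fin M → Fin N, Function.Injective σ → f σ = g σ) :
    expec N M q f = expec N M q g := by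
  classical
  unfold expec
  refine Finset.sum_congr rfl fun σ _ => ?_
  by_cases hσ : Function.Injective σ
  · rw [if_pos hσ, if_pos hσ, h σ hσ]
  · rw [if_neg hσ, if_neg hσ]

lemma expec_add (f g : (Fin M → Fin N) → ℝ) :
    expec N M q (fun σ => f σ + g σ) = expec N M q f + expec N M q g := by
  classical
  unfold expec
  rw [← Finset.sum_add_distrib]
  refine Finset.sum_congr rfl fun σ _ => ?_
  by_cases hσ : Function.Injective σ
  · simp [hσ, mul_add]
  · simp [hσ]

lemma expec_mul (c : ℝ) (f : (Fin M → Fin N) → ℝ) :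
    expec N M q (fun σ => c * f σ) = c * expec N M q f := by
  classical
  unfold expec
  rw [Finset.mul_sum]
  refine Finset.sum_congr rfl fun σ _ => ?_
  by_cases hσ : Function.Injective σ
  · simp only [if_pos hσ]; ring
  · simp [hσ]

lemma expec_sum {ι : Type*} (s : Finset ι) (f : ι → (Fin M → Fin N) → ℝ) :
    expec N M q (fun σ => ∑ j ∈ s, f j σ) = ∑ j ∈ s, expec N M q (f j) := by
  classical
  unfold expec
  rw [Finset.sum_comm]
  refine Finset.sum_congr rfl fun σ _ => ?_
  by_cases hσ : Function.Injective σ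
  · simp [hσ, Finset.mul_sum]
  · simp [hσ]

include hdep hzero hsum in
lemma expec_one (hN : (N : ℝ) ≠ 0) : expec N M q (fun _ => (1 : ℝ)) = 1 := by
  rw [expec_eq_S]
  have d := S_of_dep q hdep hzero hsum hN 0 (fun _ => (1 : ℝ))
    (fun _ _ _ => rfl) M (Nat.zero_le M) (le_refl M)
  rw [d]
  have h0 : S q 0 (fun _ => (1 : ℝ)) = ((N : ℝ)) ^ M := by
    unfold S Ppart
    have : ∀ σ : Fin M → Fin N, InjTo 0 σ := by
      intro σ k k' hk _ _
      exact absurd hk (Nat.not_lt_zero _)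
    simp [this, Finset.card_univ]
  rw [h0, Nat.sub_zero, inv_pow, inv_mul_cancel₀ (pow_ne_zero _ hN)]

include hdep hzero hsum in
lemma expec_const (hN : (N : ℝ) ≠ 0) (c : ℝ) : expec N M q (fun _ => c) = c := by
  have h := expec_mul q c (fun _ => (1 : ℝ))
  simp only [mul_one] at h
  rw [h, expec_one q hdep hzero hsum hN, mul_one]

include hpos hzero in
lemma mean_sum (hN : (N : ℝ) ≠ 0) (L : Fin N → ℝ) (m : Fin M) (σ : Fin M → Fin N)
    (hσ : Function.Injective σ) :
    (∑ i : Fin N, q m σ i * (L i / ((N : ℝ) * q m σ i)))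
      + (1 / (N : ℝ)) * ∑ t : Fin M, (if (t : ℕ) < (m : ℕ) then L (σ t) else 0)
      = (∑ i : Fin N, L i) / N := by
  classical
  set H : Finset (Fin N) := (univ.filter (fun t : Fin M => (t : ℕ) < (m : ℕ))).image σ with hH
  have hmem : ∀ i : Fin N, i ∈ H ↔ ∃ k : Fin M, (k : ℕ) < (m : ℕ) ∧ σ k = i := by
    intro i; simp [hH]
  have hterm : ∀ i : Fin N, q m σ i * (L i / ((N : ℝ) * q m σ i))
      = L i / N - (if i ∈ H then L i / N else 0) := by
    intro i
    by_cases hi : i ∈ H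
    · rw [hzero m σ i ((hmem i).mp hi), if_pos hi]; simp
    · have hq : 0 < q m σ i :=
        hpos m σ i (fun k hk hcon => hi ((hmem i).mpr ⟨k, hk, hcon⟩))
      rw [if_neg hi, sub_zero]
      field_simp
  have hsum1 : ∑ i : Fin N, q m σ i * (L i / ((N : ℝ) * q m σ i))
      = (∑ i : Fin N, L i) / N - ∑ i ∈ H, L i / N := by
    rw [Finset.sum_congr rfl (fun i _ => hterm i), Finset.sum_sub_distrib,
      Finset.sum_ite_mem, Finset.univ_inter, Finset.sum_div]
  have hsum2 : ∑ t : Fin M, (if (t : ℕ) < (m : ℕ) then L (σ t) else 0) = ∑ i ∈ H, L i := by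
    rw [← Finset.sum_filter, hH, Finset.sum_image (fun a _ b _ hab => hσ hab)]
  rw [hsum1, hsum2]
  have h3 : (1 / (N : ℝ)) * ∑ i ∈ H, L i = ∑ i ∈ H, L i / (N : ℝ) := by
    rw [Finset.mul_sum]
    exact Finset.sum_congr rfl fun i _ => by ring
  rw [h3]
  ring

include hpos hzero hsum in
lemma qG_sum (hN : (N : ℝ) ≠ 0) (L : Fin N → ℝ) (m : Fin M) (σ : Fin M → Fin N)
    (hσ : Function.Injective σ) :
    ∑ i : Fin N, q m σ i * (L i / ((N : ℝ) * q m σ i)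
        + (1 / (N : ℝ)) * ∑ t : Fin M, (if (t : ℕ) < (m : ℕ) then L (σ t) else 0))
      = (∑ i : Fin N, L i) / N := by
  have expand : ∑ i : Fin N, q m σ i * (L i / ((N : ℝ) * q m σ i)
        + (1 / (N : ℝ)) * ∑ t : Fin M, (if (t : ℕ) < (m : ℕ) then L (σ t) else 0))
      = (∑ i : Fin N, q m σ i * (L i / ((N : ℝ) * q m σ i)))
        + (1 / (N : ℝ)) * ∑ t : Fin M, (if (t : ℕ) < (m : ℕ) then L (σ t) else 0) := by
    simp only [mul_add, Finset.sum_add_distrib, ← Finset.sum_mul, hsum m σ, one_mul]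
  rw [expand]
  exact mean_sum q hpos hzero hN L m σ hσ

include hpos hzero hsum in
lemma qG2_sum (hN : (N : ℝ) ≠ 0) (L : Fin N → ℝ) (m : Fin M) (σ : Fin M → Fin N)
    (hσ : Function.Injective σ) :
    ∑ i : Fin N, q m σ i * (L i / ((N : ℝ) * q m σ i)
        + (1 / (N : ℝ)) * ∑ t : Fin M, (if (t : ℕ) < (m : ℕ) then L (σ t) else 0)) ^ 2
      = condVar N M L q m σ + ((∑ i : Fin N, L i) / N) ^ 2 := by
  set c : ℝ := (1 / (N : ℝ)) * ∑ t : Fin M, (if (t : ℕ) < (m : ℕ) then L (σ t) else 0) with hc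
  set w : Fin N → ℝ := fun i => L i / ((N : ℝ) * q m σ i) with hw
  have expand : ∑ i : Fin N, q m σ i * (w i + c) ^ 2
      = (∑ i : Fin N, q m σ i * (w i) ^ 2)
        + 2 * c * (∑ i : Fin N, q m σ i * w i) + c ^ 2 := by
    have : ∀ i : Fin N, q m σ i * (w i + c) ^ 2
        = q m σ i * (w i) ^ 2 + (2 * c) * (q m σ i * w i) + c ^ 2 * q m σ i := by
      intro i; ring
    rw [Finset.sum_congr rfl fun i _ => this i]
    rw [Finset.sum_add_distrib, Finset.sum_add_distrib, ← Finset.mul_sum, ← Finset.mul_sum,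
      hsum m σ, mul_one]
  have hmean : (∑ i : Fin N, q m σ i * w i) + c = (∑ i : Fin N, L i) / N :=
    mean_sum q hpos hzero hN L m σ hσ
  rw [expand]
  unfold condVar
  rw [← hmean]
  ring

include hdep hpos hzero hsum in
lemma expec_a (hN : (N : ℝ) ≠ 0) (L : Fin N → ℝ) (m : Fin M) :
    expec N M q (aTerm N M L q m) = (∑ i : Fin N, L i) / N := by
  set G : (Fin M → Fin N) → Fin N → ℝ := fun σ i =>
    L i / ((N : ℝ) * q m σ i)
      + (1 / (N : ℝ)) * ∑ t : Fin M, (if (t : ℕ) < (m : ℕ) then L (σ t) else 0) with hGdef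
  have hG : ∀ σ σ' : Fin M → Fin N,
      (∀ k : Fin M, (k : ℕ) < (m : ℕ) → σ k = σ' k) → G σ = G σ' := by
    intro σ σ' h
    funext i
    simp only [hGdef]
    rw [hdep m σ σ' h]
    congr 2
    refine Finset.sum_congr rfl fun t _ => ?_
    by_cases ht : (t : ℕ) < (m : ℕ)
    · rw [if_pos ht, if_pos ht, h t ht]
    · rw [if_neg ht, if_neg ht]
  have e0 : expec N M q (aTerm N M L q m) = expec N M q (fun σ => G σ (σ m)) := rfl
  rw [e0, tower q hdep hzero hsum hN m G hG]
  have e1 : expec N M q (fun σ => ∑ i : Fin N, q m σ i * G σ i)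
      = expec N M q (fun _ => (∑ i : Fin N, L i) / N) :=
    expec_congr q _ _ (fun σ hσ => qG_sum q hpos hzero hsum hN L m σ hσ)
  rw [e1, expec_const q hdep hzero hsum hN]

include hdep hpos hzero hsum in
lemma expec_sq' (hN : (N : ℝ) ≠ 0) (L : Fin N → ℝ) (m : Fin M) :
    expec N M q (fun σ => aTerm N M L q m σ * aTerm N M L q m σ)
      = expec N M q (condVar N M L q m) + ((∑ i : Fin N, L i) / N) ^ 2 := by
  set G : (Fin M → Fin N) → Fin N → ℝ := fun σ i =>
    (L i / ((N : ℝ) * q m σ i)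
      + (1 / (N : ℝ)) * ∑ t : Fin M, (if (t : ℕ) < (m : ℕ) then L (σ t) else 0)) ^ 2 with hGdef
  have hG : ∀ σ σ' : Fin M → Fin N,
      (∀ k : Fin M, (k : ℕ) < (m : ℕ) → σ k = σ' k) → G σ = G σ' := by
    intro σ σ' h
    funext i
    simp only [hGdef]
    rw [hdep m σ σ' h]
    congr 3
    refine Finset.sum_congr rfl fun t _ => ?_
    by_cases ht : (t : ℕ) < (m : ℕ)
    · rw [if_pos ht, if_pos ht, h t ht]
    · rw [if_neg ht, if_neg ht]
  have e00 : expec N M q (fun σ => aTerm N M L q m σ * aTerm N M L q m σ)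
      = expec N M q (fun σ => (aTerm N M L q m σ) ^ 2) :=
    expec_congr q _ _ (fun σ _ => by ring)
  have e0 : expec N M q (fun σ => (aTerm N M L q m σ) ^ 2)
      = expec N M q (fun σ => G σ (σ m)) := rfl
  rw [e00, e0, tower q hdep hzero hsum hN m G hG]
  have e1 : expec N M q (fun σ => ∑ i : Fin N, q m σ i * G σ i)
      = expec N M q (fun σ => condVar N M L q m σ + ((∑ i : Fin N, L i) / N) ^ 2) :=
    expec_congr q _ _ (fun σ hσ => qG2_sum q hpos hzero hsum hN L m σ hσ)
  rw [e1, expec_add q (condVar N M L q m) (fun _ => ((∑ i : Fin N, L i) / N) ^ 2),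
    expec_const q hdep hzero hsum hN]

include hdep hpos hzero hsum in
lemma expec_cross (hN : (N : ℝ) ≠ 0) (L : Fin N → ℝ) (m m' : Fin M)
    (hmm : (m : ℕ) < (m' : ℕ)) :
    expec N M q (fun σ => aTerm N M L q m σ * aTerm N M L q m' σ)
      = ((∑ i : Fin N, L i) / N) ^ 2 := by
  set G : (Fin M → Fin N) → Fin N → ℝ := fun σ i =>
    aTerm N M L q m σ * (L i / ((N : ℝ) * q m' σ i)
      + (1 / (N : ℝ)) * ∑ t : Fin M, (if (t : ℕ) < (m' : ℕ) then L (σ t) else 0)) with hGdef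
  have hG : ∀ σ σ' : Fin M → Fin N,
      (∀ k : Fin M, (k : ℕ) < (m' : ℕ) → σ k = σ' k) → G σ = G σ' := by
    intro σ σ' h
    have ha : aTerm N M L q m σ = aTerm N M L q m σ' := by
      unfold aTerm
      rw [h m hmm, hdep m σ σ' (fun k hk => h k (hk.trans hmm))]
      congr 2
      refine Finset.sum_congr rfl fun t _ => ?_
      by_cases ht : (t : ℕ) < (m : ℕ)
      · rw [if_pos ht, if_pos ht, h t (ht.trans hmm)]
      · rw [if_neg ht, if_neg ht]
    funext i
    simp only [hGdef]
    rw [ha, hdep m' σ σ' h]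
    congr 3
    refine Finset.sum_congr rfl fun t _ => ?_
    by_cases ht : (t : ℕ) < (m' : ℕ)
    · rw [if_pos ht, if_pos ht, h t ht]
    · rw [if_neg ht, if_neg ht]
  have e0 : expec N M q (fun σ => aTerm N M L q m σ * aTerm N M L q m' σ)
      = expec N M q (fun σ => G σ (σ m')) := rfl
  rw [e0, tower q hdep hzero hsum hN m' G hG]
  have e1 : expec N M q (fun σ => ∑ i : Fin N, q m' σ i * G σ i)
      = expec N M q (fun σ => ((∑ i : Fin N, L i) / N) * aTerm N M L q m σ) := by
    refine expec_congr q _ _ (fun σ hσ => ?_)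
    have hstep : ∑ i : Fin N, q m' σ i * G σ i
        = aTerm N M L q m σ * ∑ i : Fin N, q m' σ i * (L i / ((N : ℝ) * q m' σ i)
          + (1 / (N : ℝ)) * ∑ t : Fin M, (if (t : ℕ) < (m' : ℕ) then L (σ t) else 0)) := by
      rw [Finset.mul_sum]
      refine Finset.sum_congr rfl fun i _ => ?_
      simp only [hGdef]
      ring
    rw [hstep, qG_sum q hpos hzero hsum hN L m' σ hσ]
    ring
  rw [e1, expec_mul q ((∑ i : Fin N, L i) / N) (aTerm N M L q m),
    expec_a q hdep hpos hzero hsum hN L m]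
  ring

end WithHyp


end PureAux

/-- Variance decomposition of the PURE estimator for a fixed pool:
`Var[R_PURE] = (1/M²)∑_m E[Var[w_m·L(i_m) | i_{1:m-1}]]`. -/
theorem pure_variance (N M : ℕ) (hM : 0 < M) (hMN : M ≤ N)
    (L : Fin N → ℝ) (q : Fin M → (Fin M → Fin N) → Fin N → ℝ)
    (hdep : ∀ (m : Fin M) (σ σ' : Fin M → Fin N),
      (∀ k : Fin M, (k : ℕ) < (m : ℕ) → σ k = σ' k) → q m σ = q m σ')
    (hpos : ∀ (m : Fin M) (σ : Fin M → Fin N) (i : Fin N),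
      (∀ k : Fin M, (k : ℕ) < (m : ℕ) → σ k ≠ i) → 0 < q m σ i)
    (hzero : ∀ (m : Fin M) (σ : Fin M → Fin N) (i : Fin N),
      (∃ k : Fin M, (k : ℕ) < (m : ℕ) ∧ σ k = i) → q m σ i = 0)
    (hsum : ∀ (m : Fin M) (σ : Fin M → Fin N), ∑ i : Fin N, q m σ i = 1) :
    expec N M q (fun σ => ((1 / (M : ℝ)) * ∑ m : Fin M, aTerm N M L q m σ) ^ 2)
        - (expec N M q (fun σ => (1 / (M : ℝ)) * ∑ m : Fin M, aTerm N M L q m σ)) ^ 2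
      = (1 / (M : ℝ) ^ 2) * ∑ m : Fin M, expec N M q (condVar N M L q m) := by
  classical
  have hN0 : 0 < N := lt_of_lt_of_le hM hMN
  have hN : (N : ℝ) ≠ 0 := Nat.cast_ne_zero.mpr hN0.ne'
  have hMr : (M : ℝ) ≠ 0 := Nat.cast_ne_zero.mpr hM.ne'
  set μ : ℝ := (∑ i : Fin N, L i) / N with hμ
  -- products of terms
  have hprod : ∀ m m' : Fin M,
      expec N M q (fun σ => aTerm N M L q m σ * aTerm N M L q m' σ)
        = (if m = m' then expec N M q (condVar N M L q m) else 0) + μ ^ 2 := by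
    intro m m'
    rcases lt_trichotomy ((m : ℕ)) ((m' : ℕ)) with h | h | h
    · rw [if_neg (fun he => absurd (congrArg Fin.val he) (Nat.ne_of_lt h)), zero_add]
      exact PureAux.expec_cross q hdep hpos hzero hsum hN L m m' h
    · have he : m = m' := Fin.ext h
      rw [if_pos he, ← he]
      exact PureAux.expec_sq' q hdep hpos hzero hsum hN L m
    · rw [if_neg (fun he => absurd (congrArg Fin.val he) (Nat.ne_of_gt h)), zero_add]
      have hc := PureAux.expec_cross q hdep hpos hzero hsum hN L m' m h
      rw [← hc]
      exact PureAux.expec_congr q _ _ (fun σ _ => by ring)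
  -- first moment of the sum
  have hEA : expec N M q (fun σ => ∑ m : Fin M, aTerm N M L q m σ) = (M : ℝ) * μ := by
    rw [PureAux.expec_sum q Finset.univ (fun m => aTerm N M L q m),
      Finset.sum_congr rfl (fun m _ => PureAux.expec_a q hdep hpos hzero hsum hN L m),
      ← hμ]
    simp [Finset.card_univ, mul_comm]
  -- second moment of the sum
  have hEA2 : expec N M q
      (fun σ => (∑ m : Fin M, aTerm N M L q m σ) * (∑ m : Fin M, aTerm N M L q m σ))
      = (∑ m : Fin M, expec N M q (condVar N M L q m)) + (M : ℝ) ^ 2 * μ ^ 2 := by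
    have e1 : (fun σ => (∑ m : Fin M, aTerm N M L q m σ) * (∑ m : Fin M, aTerm N M L q m σ))
        = fun σ => ∑ m : Fin M, ∑ m' : Fin M, aTerm N M L q m σ * aTerm N M L q m' σ := by
      funext σ
      rw [Finset.sum_mul_sum]
    rw [e1, PureAux.expec_sum q Finset.univ
      (fun m σ => ∑ m' : Fin M, aTerm N M L q m σ * aTerm N M L q m' σ),
      Finset.sum_congr rfl (fun m _ => PureAux.expec_sum q Finset.univ
        (fun m' σ => aTerm N M L q m σ * aTerm N M L q m' σ)),
      Finset.sum_congr rfl (fun m _ => Finset.sum_congr rfl (fun m' _ => hprod m m'))]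
    simp only [Finset.sum_add_distrib, Finset.sum_ite_eq, Finset.mem_univ, if_true,
      Finset.sum_const, Finset.card_univ, Fintype.card_fin, nsmul_eq_mul]
    ring
  -- rewrite the two expectations in the goal
  have l1 : expec N M q
      (fun σ => ((1 / (M : ℝ)) * ∑ m : Fin M, aTerm N M L q m σ) ^ 2)
      = (1 / (M : ℝ)) ^ 2
        * ((∑ m : Fin M, expec N M q (condVar N M L q m)) + (M : ℝ) ^ 2 * μ ^ 2) := by
    have e : (fun σ => ((1 / (M : ℝ)) * ∑ m : Fin M, aTerm N M L q m σ) ^ 2)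
        = fun σ => (1 / (M : ℝ)) ^ 2
            * ((∑ m : Fin M, aTerm N M L q m σ) * (∑ m : Fin M, aTerm N M L q m σ)) := by
      funext σ
      ring
    rw [e]
    have h2 := PureAux.expec_mul q ((1 / (M : ℝ)) ^ 2)
      (fun σ => (∑ m : Fin M, aTerm N M L q m σ) * (∑ m : Fin M, aTerm N M L q m σ))
    rw [h2, hEA2]
  have l2 : expec N M q (fun σ => (1 / (M : ℝ)) * ∑ m : Fin M, aTerm N M L q m σ)
      = (1 / (M : ℝ)) * ((M : ℝ) * μ) := by
    have h2 := PureAux.expec_mul q (1 / (M : ℝ))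
      (fun σ => ∑ m : Fin M, aTerm N M L q m σ)
    rw [h2, hEA]
  rw [l1, l2]
  field_simp
  ring
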